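/- arXiv:2103.02070 — 3 statements merged into one kernel-verified Lean document; each statement's English description precedes it below -/
import Mathlib

section
/- Let V_1, ..., V_n be isometries on a Hilbert space H with pairwise orthogonal ranges, i.e., Σ_{k=1}^n V_k V_k* ≤ I. Then the subspace ⋂_{k=1}^n ker V_k* is wandering for the family: for distinct words μ, ν in the free monoid on n letters, V_μ (⋂_k ker V_k*) ⟂ V_ν (⋂_k ker V_k*), where V_μ = V_{μ_1}···V_{μ_m}. -/
open ContinuousLinearMap

/-- For a row isometry `V_1, …, V_n` (isometries with pairwise orthogonal ranges),
the joint kernel `⋂_k ker V_k*` is a wandering subspace: for distinct words `μ ≠ ν`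
in the free monoid, `V_μ (⋂ ker V_k*) ⟂ V_ν (⋂ ker V_k*)`. -/
theorem stmt_4 {H : Type*} [NormedAddCommGroup H] [InnerProductSpace ℂ H] [CompleteSpace H]
    (n : ℕ) (V : Fin n → H →L[ℂ] H)
    (hiso : ∀ i, adjoint (V i) ∘L V i = 1)
    (horth : ∀ i j, i ≠ j → adjoint (V i) ∘L V j = 0) :
    ∀ μ ν : List (Fin n), μ ≠ ν →
      ∀ x ∈ ⨅ k, LinearMap.ker ((adjoint (V k) : H →L[ℂ] H) : H →ₗ[ℂ] H), ∀ y ∈ ⨅ k, LinearMap.ker ((adjoint (V k) : H →L[ℂ] H) : H →ₗ[ℂ] H),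
        (inner ℂ ((μ.map V).prod x) ((ν.map V).prod y) : ℂ) = 0 := by
  intro μ
  induction μ with
  | nil =>
    intro ν hne x hx y hy
    cases ν with
    | nil => exact absurd rfl hne
    | cons j ν' =>
      have hxj : adjoint (V j) x = 0 := by
        simp only [Submodule.mem_iInf, LinearMap.mem_ker] at hx
        exact hx j
      simp only [List.map_cons, List.prod_cons, List.map_nil, List.prod_nil, one_apply_eq_self,
        mul_apply_eq_comp]
      rw [← adjoint_inner_left, hxj, inner_zero_left]
  | cons i μ' ih =>
    intro ν hne x hx y hy
    cases ν with
    | nil =>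
      have hyi : adjoint (V i) y = 0 := by
        simp only [Submodule.mem_iInf, LinearMap.mem_ker] at hy
        exact hy i
      simp only [List.map_cons, List.prod_cons, List.map_nil, List.prod_nil, one_apply_eq_self,
        mul_apply_eq_comp]
      rw [← adjoint_inner_right, hyi, inner_zero_right]
    | cons j ν' =>
      simp only [List.map_cons, List.prod_cons, mul_apply_eq_comp]
      by_cases hij : i = j
      · subst hij
        have hμν : μ' ≠ ν' := by
          intro h; exact hne (by rw [h])
        rw [← adjoint_inner_left, ← mul_apply_eq_comp, show adjoint (V i) * V i = 1 from hiso i, one_apply_eq_self]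
        exact ih ν' hμν x hx y hy
      · rw [← adjoint_inner_left, ← mul_apply_eq_comp, show adjoint (V j) * V i = 0 from horth j i (Ne.symm hij),
          zero_apply, inner_zero_left]
end

section
/- Let W, V_1, ..., V_n be isometries on a Hilbert space H satisfying W V_k = V_{k+1} for 1 ≤ k ≤ n−1 and W V_n = V_1 W, with the V_k having pairwise orthogonal ranges. If the family {V_2, ..., V_n, V_1 W} is a row unitary, i.e., V_1 W W* V_1* + Σ_{i=2}^n V_i V_i* = I, then W is unitary and Σ_{i=1}^n V_i V_i* = I. -/
open ContinuousLinearMap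

/-- For an isometric representation `{W, V_1, …, V_n}` of the odometer semigroup `O_n`
(indexed here by `Fin n`, with `V ⟨k⟩` playing the role of `V_{k+1}`):
if the family `{V_2, …, V_n, V_1 W}` is a row unitary, then `W` is unitary and
`{V_1, …, V_n}` is a row unitary. -/
theorem stmt_5 {H : Type*} [NormedAddCommGroup H] [InnerProductSpace ℂ H] [CompleteSpace H]
    (n : ℕ) (hn : 0 < n) (W : H →L[ℂ] H) (V : Fin n → H →L[ℂ] H)
    (hWiso : adjoint W ∘L W = 1)
    (hViso : ∀ i, adjoint (V i) ∘L V i = 1)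
    (horth : ∀ i j, i ≠ j → adjoint (V i) ∘L V j = 0)
    (hWV : ∀ i : Fin n, ∀ h : (i : ℕ) + 1 < n, W ∘L V i = V ⟨(i : ℕ) + 1, h⟩)
    (hWVn : W ∘L V ⟨n - 1, by omega⟩ = V ⟨0, hn⟩ ∘L W)
    (hrow : (V ⟨0, hn⟩ ∘L W) ∘L adjoint (V ⟨0, hn⟩ ∘L W) +
        ∑ i ∈ Finset.univ.erase (⟨0, hn⟩ : Fin n), V i ∘L adjoint (V i) = 1) :
    W ∘L adjoint W = 1 ∧ ∑ i : Fin n, V i ∘L adjoint (V i) = 1 := by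
  obtain ⟨m, rfl⟩ : ∃ m, n = m + 1 := ⟨n - 1, by omega⟩
  set g : Fin (m + 1) → H →L[ℂ] H := fun j =>
    if j = (⟨0, hn⟩ : Fin (m + 1)) then
      (V ⟨0, hn⟩ ∘L W) ∘L adjoint (V ⟨0, hn⟩ ∘L W)
    else V j ∘L adjoint (V j) with hg
  have hfg : ∀ i : Fin (m + 1),
      (W ∘L V i) ∘L adjoint (W ∘L V i) = g (finRotate (m + 1) i) := by
    intro i
    rcases eq_or_ne i (Fin.last m) with rfl | hne
    · have h1 : finRotate (m + 1) (Fin.last m) = ⟨0, hn⟩ := by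
        rw [finRotate_succ_apply]
        ext
        simp [Fin.val_add_one]
      have h2 : (Fin.last m) = (⟨m + 1 - 1, by omega⟩ : Fin (m + 1)) := rfl
      rw [h1, h2, hWVn]
      simp only [hg]
      simp
    · have hlt : (i : ℕ) + 1 < m + 1 := by
        have := Fin.val_lt_last hne
        omega
      have h1 : finRotate (m + 1) i = ⟨(i : ℕ) + 1, hlt⟩ := by
        rw [finRotate_succ_apply]
        ext
        rw [Fin.val_add_one_of_lt (by exact Fin.lt_last_iff_ne_last.mpr hne)]
      rw [hWV i hlt, h1]
      have hne0 : (⟨(i : ℕ) + 1, hlt⟩ : Fin (m + 1)) ≠ ⟨0, hn⟩ := by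
        simp only [ne_eq, Fin.mk.injEq]; omega
      simp only [hg]
      rw [if_neg hne0]
  have key : W ∘L (∑ i : Fin (m + 1), V i ∘L adjoint (V i)) ∘L adjoint W = 1 := by
    have h1 : W ∘L (∑ i : Fin (m + 1), V i ∘L adjoint (V i)) ∘L adjoint W
        = ∑ i : Fin (m + 1), (W ∘L V i) ∘L adjoint (W ∘L V i) := by
      rw [finset_sum_comp, comp_finset_sum]
      refine Finset.sum_congr rfl fun i _ => ?_
      rw [adjoint_comp]
      ext x; simp
    rw [h1]
    calc ∑ i : Fin (m + 1), (W ∘L V i) ∘L adjoint (W ∘L V i)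
        = ∑ i : Fin (m + 1), g (finRotate (m + 1) i) :=
          Finset.sum_congr rfl fun i _ => hfg i
      _ = ∑ j : Fin (m + 1), g j := Equiv.sum_comp _ g
      _ = g ⟨0, hn⟩ + ∑ j ∈ Finset.univ.erase (⟨0, hn⟩ : Fin (m + 1)), g j :=
          (Finset.add_sum_erase _ g (Finset.mem_univ _)).symm
      _ = 1 := by
          rw [← hrow, hg]
          simp only [if_pos rfl]
          congr 1
          refine Finset.sum_congr rfl fun j hj => ?_
          rw [if_neg (Finset.ne_of_mem_erase hj)]
  set S := ∑ i : Fin (m + 1), V i ∘L adjoint (V i) with hS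
  have hWiso' : adjoint W * W = 1 := hWiso
  have key' : W * (S * adjoint W) = 1 := key
  have hP : S = 1 := by
    calc S = 1 * S * 1 := by simp
      _ = (adjoint W * W) * S * (adjoint W * W) := by rw [hWiso']
      _ = adjoint W * (W * (S * adjoint W)) * W := by simp only [mul_assoc]
      _ = adjoint W * 1 * W := by rw [key']
      _ = adjoint W * W := by rw [mul_one]
      _ = 1 := hWiso'
  refine ⟨?_, hP⟩
  rw [hP] at key
  have key'' : W * (1 * adjoint W) = 1 := key
  rw [one_mul] at key''
  exact key''
end

section
/- Let {V_1, ..., V_n} be the left regular representation of the free semigroup F_n^+ on ℓ²(F_n^+) (V_i e_μ = e_{iμ}), and fix λ in the unit circle. Define W on basis vectors by: W e_μ = e_{(μ_1+1)μ_2···μ_m} if μ_1 ≠ n; W e_μ = e_{1(μ_2+1)μ_3···μ_m} if μ_1 = n, μ_2 ≠ n; ...; W e_{n···n} = λ e_{1···1} (m letters), and W e_∅ = λ e_∅. Then W extends to a unitary operator on ℓ²(F_n^+), and (W, V_1, ..., V_n) satisfies W V_k = V_{k+1} for 1 ≤ k ≤ n−1 and W V_n = V_1 W; i.e., it is an isometric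 representation of the odometer semigroup with W unitary and {V_i} pure. -/
open ContinuousLinearMap
open scoped ENNReal
set_option synthInstance.maxHeartbeats 1000000
set_option maxHeartbeats 1000000

/-- The "add one" odometer map on words over `{1, …, n}` (`0`-indexed): increment the
first letter, carrying to the right; the full-carry word `n ⋯ n` is sent to `1 ⋯ 1`. -/
def odometerAddOne {n : ℕ} [NeZero n] : List (Fin n) → List (Fin n)
  | [] => []
  | a :: rest =>
      if h : (a : ℕ) + 1 < n then (⟨(a : ℕ) + 1, h⟩ : Fin n) :: rest
      else (0 : Fin n) :: odometerAddOne rest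


noncomputable section OdometerAux

variable {α : Type*}

private lemma two_pos' : (0:ℝ) < (2:ℝ≥0∞).toReal := by norm_num

lemma memℓp_mulShift (c : α → ℂ) (hc : ∀ a, ‖c a‖ = 1) (τ : α ≃ α)
    (f : lp (fun _ : α => ℂ) 2) : Memℓp (fun ν => c ν * f (τ ν)) 2 := by
  apply memℓp_gen
  have hs : Summable (fun ν : α => ‖f ν‖ ^ (2:ℝ≥0∞).toReal) :=
    (lp.hasSum_norm two_pos' f).summable
  exact ((τ.summable_iff (f := fun ν : α => ‖f ν‖ ^ (2:ℝ≥0∞).toReal)).2 hs).congr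
    (fun ν => by simp [Function.comp, norm_mul, hc])

def mulShiftLi (c : α → ℂ) (hc : ∀ a, ‖c a‖ = 1) (τ : α ≃ α) :
    lp (fun _ : α => ℂ) 2 ≃ₗᵢ[ℂ] lp (fun _ : α => ℂ) 2 where
  toLinearEquiv :=
    { toFun := fun f => ⟨fun ν => c ν * f (τ ν), memℓp_mulShift c hc τ f⟩
      invFun := fun g => ⟨fun μ => (c (τ.symm μ))⁻¹ * g (τ.symm μ),
        memℓp_mulShift _ (fun a => by rw [norm_inv, hc, inv_one]) τ.symm g⟩
      map_add' := fun f g => by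
        apply lp.ext; funext ν
        simp [lp.coeFn_add, mul_add]
        rfl
      map_smul' := fun r f => by
        apply lp.ext; funext ν
        simp [lp.coeFn_smul]; ring
      left_inv := fun f => by
        apply lp.ext; funext μ
        have hc0 : c (τ.symm μ) ≠ 0 := fun h => by simpa [h] using hc (τ.symm μ)
        show (c (τ.symm μ))⁻¹ * (c (τ.symm μ) * f (τ (τ.symm μ))) = f μ
        rw [inv_mul_cancel_left₀ hc0, Equiv.apply_symm_apply]
      right_inv := fun g => by
        apply lp.ext; funext ν
        show c ν * ((c (τ.symm (τ ν)))⁻¹ * g (τ.symm (τ ν))) = g ν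
        rw [Equiv.symm_apply_apply]
        rw [mul_inv_cancel_left₀ (fun h => by simpa [h] using hc ν)] }
  norm_map' := fun f => by
    have h1 := lp.hasSum_norm two_pos'
      (⟨fun ν => c ν * f (τ ν), memℓp_mulShift c hc τ f⟩ : lp (fun _ : α => ℂ) 2)
    have h2 : HasSum (fun ν => ‖f (τ ν)‖ ^ (2:ℝ≥0∞).toReal)
        (‖(⟨fun ν => c ν * f (τ ν), memℓp_mulShift c hc τ f⟩ : lp (fun _ : α => ℂ) 2)‖
          ^ (2:ℝ≥0∞).toReal) := by
      refine h1.congr_fun fun ν => ?_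
      show _ = ‖c ν * f (τ ν)‖ ^ _
      rw [norm_mul, hc, one_mul]
    have h3 := (τ.hasSum_iff (f := fun μ => ‖f μ‖ ^ (2:ℝ≥0∞).toReal)).1 h2
    have h4 := (lp.hasSum_norm two_pos' f).unique h3
    refine Real.rpow_left_injOn two_pos'.ne' ?_ ?_ ?_
    · exact norm_nonneg _
    · exact norm_nonneg _
    · simpa using h4.symm

lemma mulShiftLi_apply (c : α → ℂ) (hc : ∀ a, ‖c a‖ = 1) (τ : α ≃ α)
    (f : lp (fun _ : α => ℂ) 2) (ν : α) :
    (mulShiftLi c hc τ f : ∀ _ : α, ℂ) ν = c ν * f (τ ν) := rfl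

end OdometerAux

noncomputable section OdometerAux2

variable {α : Type*} [DecidableEq α]

def evalCLM (ν : α) : lp (fun _ : α => ℂ) 2 →L[ℂ] ℂ :=
  LinearMap.mkContinuous
    { toFun := fun f => f ν
      map_add' := fun f g => by simp only [lp.coeFn_add, Pi.add_apply]
      map_smul' := fun r f => by simp only [lp.coeFn_smul, Pi.smul_apply, RingHom.id_apply] }
    1 (fun f => by show ‖f ν‖ ≤ 1 * ‖f‖; simpa using lp.norm_apply_le_norm (by norm_num) f ν)

@[simp] lemma evalCLM_apply (ν : α) (f : lp (fun _ : α => ℂ) 2) : evalCLM ν f = f ν := rfl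

lemma clm_apply_hasSum (A : lp (fun _ : α => ℂ) 2 →L[ℂ] lp (fun _ : α => ℂ) 2)
    (f : lp (fun _ : α => ℂ) 2) :
    HasSum (fun μ => f μ • A (lp.single 2 μ (1:ℂ))) (A f) := by
  have h := (lp.hasSum_single (p := 2) (by norm_num) f).mapL A
  refine h.congr_fun fun μ => ?_
  rw [← map_smul, ← lp.single_smul, smul_eq_mul, mul_one]

lemma clm_ext_single (A B : lp (fun _ : α => ℂ) 2 →L[ℂ] lp (fun _ : α => ℂ) 2)
    (h : ∀ μ, A (lp.single 2 μ (1:ℂ)) = B (lp.single 2 μ (1:ℂ))) : A = B := by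
  refine ContinuousLinearMap.ext fun f => ?_
  have hA := clm_apply_hasSum A f
  simp_rw [h] at hA
  exact hA.unique (clm_apply_hasSum B f)

end OdometerAux2

noncomputable section OdometerAux3

lemma shift_coord_ne {n : ℕ}
    (T : lp (fun _ : List (Fin n) => ℂ) 2 →L[ℂ] lp (fun _ : List (Fin n) => ℂ) 2)
    (i : Fin n) (hT : ∀ μ, T (lp.single 2 μ (1:ℂ)) = lp.single 2 (i :: μ) (1:ℂ))
    (f : lp (fun _ : List (Fin n) => ℂ) 2) (ν : List (Fin n))
    (hν : ∀ τ, ν ≠ i :: τ) : (T f) ν = 0 := by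
  have h0 := clm_apply_hasSum T f
  simp_rw [hT] at h0
  have h := h0.mapL (evalCLM ν)
  have h2 : HasSum (fun _ : List (Fin n) => (0:ℂ)) (evalCLM ν (T f)) := by
    refine h.congr_fun fun μ => ?_
    rw [map_smul, evalCLM_apply, lp.single_apply_ne 2 _ _ (hν μ), smul_zero]
  simpa using h2.unique hasSum_zero

lemma shift_coord_cons {n : ℕ}
    (T : lp (fun _ : List (Fin n) => ℂ) 2 →L[ℂ] lp (fun _ : List (Fin n) => ℂ) 2)
    (i : Fin n) (hT : ∀ μ, T (lp.single 2 μ (1:ℂ)) = lp.single 2 (i :: μ) (1:ℂ))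
    (f : lp (fun _ : List (Fin n) => ℂ) 2) (τ : List (Fin n)) :
    (T f) (i :: τ) = f τ := by
  have h0 := clm_apply_hasSum T f
  simp_rw [hT] at h0
  have h := h0.mapL (evalCLM (i :: τ))
  have h2 : HasSum (fun μ : List (Fin n) => if μ = τ then f τ else 0)
      (evalCLM (i :: τ) (T f)) := by
    refine h.congr_fun fun μ => ?_
    by_cases hμ : μ = τ
    · subst hμ
      rw [map_smul, evalCLM_apply, lp.single_apply_self, if_pos rfl, smul_eq_mul, mul_one]
    · rw [map_smul, evalCLM_apply,
        lp.single_apply_ne 2 _ _ (show (i :: τ) ≠ i :: μ by simp [Ne.symm hμ]),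
        smul_zero, if_neg hμ]
  simpa using h2.unique (hasSum_ite_eq τ (f τ))

lemma prod_coord_zero {n : ℕ}
    (V : Fin n → lp (fun _ : List (Fin n) => ℂ) 2 →L[ℂ] lp (fun _ : List (Fin n) => ℂ) 2)
    (hVe : ∀ (i : Fin n) (μ : List (Fin n)),
      V i (lp.single 2 μ (1 : ℂ)) = lp.single 2 (i :: μ) (1 : ℂ)) :
    ∀ (l : List (Fin n)) (f : lp (fun _ : List (Fin n) => ℂ) 2) (ν : List (Fin n)),
      ν.length < l.length → ((l.map V).prod f) ν = 0
  | [], f, ν, h => absurd h (by simp)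
  | i :: l, f, ν, h => by
    rw [List.map_cons, List.prod_cons, ContinuousLinearMap.mul_apply]
    match ν, h with
    | [], _ => exact shift_coord_ne _ i (hVe i) _ [] (fun τ => by simp)
    | a :: τ, h =>
      by_cases ha : a = i
      · subst ha
        rw [shift_coord_cons _ a (hVe a) _ τ]
        exact prod_coord_zero V hVe l _ τ (by simpa using Nat.lt_of_succ_lt_succ h)
      · exact shift_coord_ne _ i (hVe i) _ _ (fun τ' hcon => ha (by
          injection hcon with h1 h2))

end OdometerAux3

def odometerSubOne {n : ℕ} [NeZero n] : List (Fin n) → List (Fin n)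
  | [] => []
  | a :: rest =>
      if (a : ℕ) = 0 then
        (⟨n - 1, by have := NeZero.pos n; omega⟩ : Fin n) :: odometerSubOne rest
      else (⟨(a : ℕ) - 1, by have := a.isLt; omega⟩ : Fin n) :: rest

lemma odometer_left_inv {n : ℕ} [NeZero n] :
    ∀ l : List (Fin n), odometerSubOne (odometerAddOne l) = l
  | [] => rfl
  | a :: rest => by
    by_cases h : (a : ℕ) + 1 < n
    · rw [odometerAddOne, dif_pos h, odometerSubOne, if_neg (by simp)]
      exact congrArg (· :: rest) (Fin.ext (by simp))
    · rw [odometerAddOne, dif_neg h, odometerSubOne, if_pos (by simp),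
        odometer_left_inv rest]
      congr 1
      exact Fin.ext (by have := a.isLt; simp; omega)

lemma odometer_right_inv {n : ℕ} [NeZero n] :
    ∀ l : List (Fin n), odometerAddOne (odometerSubOne l) = l
  | [] => rfl
  | a :: rest => by
    by_cases h : (a : ℕ) = 0
    · rw [odometerSubOne, if_pos h, odometerAddOne,
        dif_neg (by have := NeZero.pos n; simp; omega), odometer_right_inv rest]
      congr 1
      exact Fin.ext (by simp; omega)
    · rw [odometerSubOne, if_neg h, odometerAddOne,
        dif_pos (by have := a.isLt; simp; omega)]
      congr 1
      exact Fin.ext (by have := a.isLt; simp; omega)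

def odometerEquiv {n : ℕ} [NeZero n] : List (Fin n) ≃ List (Fin n) where
  toFun := odometerAddOne
  invFun := odometerSubOne
  left_inv := odometer_left_inv
  right_inv := odometer_right_inv


/-- On `ℓ²(F_n^+)` with the left regular representation `V_i e_μ = e_{iμ}` and a
unimodular scalar `λ`, the map `e_μ ↦ e_{addOne μ}` (with scalar `λ` on full-carry
words, and `W e_∅ = λ e_∅`) extends to a unitary `W` making `(W, V_1, …, V_n)` an
isometric representation of the odometer semigroup, with `W` unitary and `{V_i}`
pure. (`V ⟨k⟩` plays the role of `V_{k+1}`.) -/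
theorem stmt_19 (n : ℕ) [NeZero n] (lam : ℂ) (hlam : ‖lam‖ = 1)
    (V : Fin n → lp (fun _ : List (Fin n) => ℂ) 2 →L[ℂ] lp (fun _ : List (Fin n) => ℂ) 2)
    (hViso : ∀ i, adjoint (V i) ∘L V i = 1)
    (hVe : ∀ (i : Fin n) (μ : List (Fin n)),
      V i (lp.single 2 μ (1 : ℂ)) = lp.single 2 (i :: μ) (1 : ℂ)) :
    ∃ W : lp (fun _ : List (Fin n) => ℂ) 2 →L[ℂ] lp (fun _ : List (Fin n) => ℂ) 2,
      (∀ μ : List (Fin n),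
        W (lp.single 2 μ (1 : ℂ)) =
          (if μ.all (fun a => (a : ℕ) = n - 1) then lam else 1) •
            lp.single 2 (odometerAddOne μ) (1 : ℂ)) ∧
      adjoint W ∘L W = 1 ∧ W ∘L adjoint W = 1 ∧
      (∀ k : Fin n, ∀ h : (k : ℕ) + 1 < n, W ∘L V k = V ⟨(k : ℕ) + 1, h⟩) ∧
      W ∘L V ⟨n - 1, by have := NeZero.ne n; omega⟩ = V 0 ∘L W ∧
      (⨅ m : ℕ, ⨆ μ : Fin m → Fin n,
        LinearMap.range ((List.ofFn μ).map V).prod.toLinearMap) = ⊥ := by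
  classical
  have hdnorm : ∀ μ : List (Fin n),
      ‖(if μ.all (fun a => (a:ℕ) = n-1) then lam else 1 : ℂ)‖ = 1 := fun μ => by
    split
    · exact hlam
    · exact norm_one
  set σ : List (Fin n) ≃ List (Fin n) := odometerEquiv with hσ
  set e := mulShiftLi
    (fun ν : List (Fin n) => (if (σ.symm ν).all (fun a => (a:ℕ) = n-1) then lam else 1 : ℂ))
    (fun ν => hdnorm _) σ.symm with he
  set W : lp (fun _ : List (Fin n) => ℂ) 2 →L[ℂ] lp (fun _ : List (Fin n) => ℂ) 2 :=
    (e : lp (fun _ : List (Fin n) => ℂ) 2 →L[ℂ] lp (fun _ : List (Fin n) => ℂ) 2) with hWdef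
  have hWapp : ∀ f, W f = e f := fun f => rfl
  have hW : ∀ μ : List (Fin n), W (lp.single 2 μ (1:ℂ)) =
      (if μ.all (fun a => (a:ℕ) = n-1) then lam else (1:ℂ)) •
        lp.single 2 (odometerAddOne μ) (1:ℂ) := by
    intro μ
    apply lp.ext; funext ν
    rw [hWapp, he, mulShiftLi_apply, lp.coeFn_smul, Pi.smul_apply, smul_eq_mul]
    by_cases hν : ν = odometerAddOne μ
    · subst hν
      have h1 : σ.symm (odometerAddOne μ) = μ := σ.symm_apply_apply μ
      rw [h1, lp.single_apply_self, lp.single_apply_self]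
    · have h2 : σ.symm ν ≠ μ := fun hcon => hν (by
        have := σ.apply_symm_apply ν
        rw [hcon] at this
        exact this.symm)
      rw [lp.single_apply_ne 2 _ _ h2, lp.single_apply_ne 2 _ _ hν, mul_zero, mul_zero]
  have hadj : adjoint W = (e.symm : lp (fun _ : List (Fin n) => ℂ) 2 →L[ℂ] lp (fun _ : List (Fin n) => ℂ) 2) := LinearIsometryEquiv.adjoint_eq_symm e
  refine ⟨W, hW, ?_, ?_, ?_, ?_, ?_⟩
  · refine ContinuousLinearMap.ext fun f => ?_
    rw [comp_apply, hadj, hWapp, ContinuousLinearMap.one_apply]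
    exact e.symm_apply_apply f
  · refine ContinuousLinearMap.ext fun f => ?_
    rw [comp_apply, hadj, ContinuousLinearMap.one_apply]
    exact e.apply_symm_apply f
  · intro k h
    apply clm_ext_single; intro μ
    rw [comp_apply, hVe, hW, hVe]
    have hk : ¬ ((k :: μ).all (fun a => (a:ℕ) = n - 1) = true) := by
      simp only [List.all_cons, Bool.and_eq_true, decide_eq_true_eq, not_and]
      intro hk'
      omega
    rw [if_neg hk, one_smul,
      show odometerAddOne (k :: μ) = (⟨(k:ℕ)+1, h⟩ : Fin n) :: μ from by
        rw [odometerAddOne, dif_pos h]]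
  · apply clm_ext_single; intro μ
    rw [comp_apply, comp_apply, hVe, hW, hW, map_smul, hVe]
    have hnpos := NeZero.pos n
    rw [show odometerAddOne ((⟨n-1, by omega⟩ : Fin n) :: μ) = (0 : Fin n) :: odometerAddOne μ
        from by rw [odometerAddOne, dif_neg (by simp; omega)]]
    congr 1
    simp [List.all_cons]
  · rw [eq_bot_iff]
    intro x hx
    rw [Submodule.mem_bot]
    apply lp.ext; funext ν
    have hx' : x ∈ ⨆ μ : Fin (ν.length + 1) → Fin n,
        LinearMap.range ((List.ofFn μ).map V).prod.toLinearMap := (Submodule.mem_iInf _).1 hx _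
    have hK : (⨆ μ : Fin (ν.length + 1) → Fin n,
        LinearMap.range ((List.ofFn μ).map V).prod.toLinearMap) ≤ LinearMap.ker (evalCLM ν).toLinearMap := by
      refine iSup_le fun μ => ?_
      rintro y ⟨g, rfl⟩
      rw [LinearMap.mem_ker]
      show (((List.ofFn μ).map V).prod g) ν = 0
      exact prod_coord_zero V hVe _ g ν (by simp)
    have h0 := LinearMap.mem_ker.1 (hK hx')
    rw [ContinuousLinearMap.coe_coe, evalCLM_apply] at h0
    exact h0
end
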